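/- Let V be a finite set, N : V → Finset V with i ∉ N i and j ∈ N i ↔ i ∈ N j for all i, j ∈ V, f : V → V → ℝ symmetric with f i j = 1 whenever j ∉ N i, and b : V → ℝ. For i ∈ V and M ⊆ V define μ_i(M) = ∏_{j ∈ M \ {i}} f i j, W(M) = Σ_{i ∈ M} μ_i(M) · b_i, and Π(M) = exp(W(M)) / Z with Z = Σ_{M' ⊆ V} exp(W(M')). Let D ⊆ V satisfy N_G(i) ∩ D = ∅ for every i ∈ D, where N_G(i) = ( N i ∪ ⋃_{j ∈ N i} N j ) \ {i}. For B ⊆ V \ D and i ∈ D set p_i(B) = exp(W(B ∪ {i})) / ( exp(W(B ∪ {i})) + exp(W(B)) ). Define the parallel-update transition kernel K_D on subsets of V by K_D(M, M') = ( ∏_{i ∈ D ∩ M'} p_i(M \ D) ) · ( ∏_{i ∈ D \ M'} (1 − p_i(M \ D)) ) if M' \ D = M \ D, and K_D(M, M') = 0 otherwise. Then Π is stationary for K_D: for every M' ⊆ V, Σ_{M ⊆ V} Π(M) · K_D(M, M') = Π(M'). -/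

import Mathlib

open Finset Real

/-- Lemma 3 of the paper: if all links of a decision schedule `D` simultaneously update
their status using the single-site Glauber update probabilities, the resulting
parallel-update Glauber dynamics has the Gibbs measure `Π(M) = exp(W M) / Z` as a
stationary distribution. -/
theorem spatialCSMA_parallel_update_stationary
    {V : Type*} [Fintype V] [DecidableEq V]
    (N : V → Finset V) (hN_irrefl : ∀ i, i ∉ N i)
    (hN_symm : ∀ i j, j ∈ N i ↔ i ∈ N j)
    (f : V → V → ℝ) (hf : ∀ i j, f i j = f j i)
    (hf_one : ∀ i j, j ∉ N i → f i j = 1)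
    (b : V → ℝ)
    (μ : V → Finset V → ℝ) (hμ : ∀ k S, μ k S = ∏ j ∈ S.erase k, f k j)
    (W : Finset V → ℝ) (hW : ∀ S, W S = ∑ k ∈ S, μ k S * b k)
    (Z : ℝ) (hZ : Z = ∑ S : Finset V, exp (W S))
    (Pi : Finset V → ℝ) (hPi : ∀ S, Pi S = exp (W S) / Z)
    (NG : V → Finset V) (hNG : ∀ i, NG i = (N i ∪ (N i).biUnion N).erase i)
    (D : Finset V) (hD : ∀ i ∈ D, NG i ∩ D = ∅)
    (p : V → Finset V → ℝ)
    (hp : ∀ i B, p i B = exp (W (B ∪ {i})) / (exp (W (B ∪ {i})) + exp (W B)))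
    (K : Finset V → Finset V → ℝ)
    (hK : ∀ M M', K M M' =
      if M' \ D = M \ D then
        (∏ i ∈ D ∩ M', p i (M \ D)) * ∏ i ∈ D \ M', (1 - p i (M \ D))
      else 0) :
    ∀ M' : Finset V, ∑ M : Finset V, Pi M * K M M' = Pi M' := by
  -- basic neighbourhood facts
  have hND : ∀ i ∈ D, ∀ j ∈ D, j ∉ N i := by
    intro i hi j hj hjN
    have hji : j ≠ i := fun h => hN_irrefl i (h ▸ hjN)
    have hmem : j ∈ NG i ∩ D := by
      rw [hNG]
      exact Finset.mem_inter.2 ⟨Finset.mem_erase.2 ⟨hji, Finset.mem_union_left _ hjN⟩, hj⟩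
    rw [hD i hi] at hmem
    exact absurd hmem (Finset.notMem_empty j)
  have hND2 : ∀ i ∈ D, ∀ k ∈ N i, ∀ j ∈ D, j ≠ i → j ∉ N k := by
    intro i hi k hk j hj hji hjN
    have hmem : j ∈ NG i ∩ D := by
      rw [hNG]
      refine Finset.mem_inter.2 ⟨Finset.mem_erase.2 ⟨hji, Finset.mem_union_right _ ?_⟩, hj⟩
      exact Finset.mem_biUnion.2 ⟨k, hk, hjN⟩
    rw [hD i hi] at hmem
    exact absurd hmem (Finset.notMem_empty j)
  -- formula for the increment of W
  have Wadd : ∀ (S : Finset V) (i : V), i ∉ S →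
      W (insert i S) = (∏ j ∈ S, f i j) * b i + ∑ k ∈ S, f k i * μ k S * b k := by
    intro S i hi
    rw [hW, Finset.sum_insert hi, hμ, Finset.erase_insert hi]
    congr 1
    apply Finset.sum_congr rfl
    intro k hk
    have hki : k ≠ i := by rintro rfl; exact hi hk
    have hiS : i ∉ S.erase k := fun h => hi (Finset.mem_of_mem_erase h)
    rw [hμ k (insert i S), hμ k S, Finset.erase_insert_of_ne hki.symm,
      Finset.prod_insert hiS]
  -- the increment of W at i ∈ D doesn't depend on the D-part of the configuration
  have Δ : ∀ (B : Finset V), Disjoint B D → ∀ i ∈ D, ∀ A ⊆ D, i ∉ A →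
      W (insert i (B ∪ A)) - W (B ∪ A) = W (insert i B) - W B := by
    intro B hBD i hiD A hAD hiA
    have hiB : i ∉ B := fun h => (Finset.disjoint_left.1 hBD h) hiD
    have hiBA : i ∉ B ∪ A := by
      simp only [Finset.mem_union]; rintro (h | h); exacts [hiB h, hiA h]
    have hBA : Disjoint B A := hBD.mono_right hAD
    rw [Wadd _ _ hiBA, Wadd _ _ hiB, hW (B ∪ A), hW B]
    have hprod : ∏ j ∈ B ∪ A, f i j = ∏ j ∈ B, f i j := by
      rw [Finset.prod_union hBA,
        Finset.prod_eq_one fun j hj => hf_one i j (hND i hiD j (hAD hj)), mul_one]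
    rw [hprod]
    have hsum : ∑ k ∈ B ∪ A, (f k i - 1) * (μ k (B ∪ A) * b k)
        = ∑ k ∈ B, (f k i - 1) * (μ k B * b k) := by
      rw [Finset.sum_union hBA]
      have hA0 : ∑ k ∈ A, (f k i - 1) * (μ k (B ∪ A) * b k) = 0 := by
        apply Finset.sum_eq_zero
        intro k hk
        have : f k i = 1 := by rw [hf]; exact hf_one i k (hND i hiD k (hAD hk))
        rw [this]; ring
      rw [hA0, add_zero]
      apply Finset.sum_congr rfl
      intro k hk
      by_cases hkN : k ∈ N i
      · -- μ k (B ∪ A) = μ k B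
        have hkA : k ∉ A := Finset.disjoint_left.1 hBA hk
        have hμeq : μ k (B ∪ A) = μ k B := by
          rw [hμ, hμ, Finset.erase_union_distrib, Finset.erase_eq_of_notMem hkA,
            Finset.prod_union ((hBA.mono_left (Finset.erase_subset _ _)))]
          have : ∏ j ∈ A, f k j = 1 := by
            apply Finset.prod_eq_one
            intro j hj
            have hji : j ≠ i := by rintro rfl; exact hiA hj
            exact hf_one k j (hND2 i hiD k hkN j (hAD hj) hji)
          rw [this, mul_one]
        rw [hμeq]
      · have : f k i = 1 := by rw [hf]; exact hf_one i k hkN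
        rw [this]; ring
    have e1 := Finset.sum_sub_distrib (s := B ∪ A)
      (f := fun k => f k i * (μ k (B ∪ A) * b k)) (g := fun k => μ k (B ∪ A) * b k)
    have e2 := Finset.sum_sub_distrib (s := B)
      (f := fun k => f k i * (μ k B * b k)) (g := fun k => μ k B * b k)
    have hsum' : (∑ k ∈ B ∪ A, f k i * (μ k (B ∪ A) * b k)) - ∑ k ∈ B ∪ A, μ k (B ∪ A) * b k
        = (∑ k ∈ B, f k i * (μ k B * b k)) - ∑ k ∈ B, μ k B * b k := by
      rw [← e1, ← e2]
      calc ∑ k ∈ B ∪ A, (f k i * (μ k (B ∪ A) * b k) - μ k (B ∪ A) * b k)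
          = ∑ k ∈ B ∪ A, (f k i - 1) * (μ k (B ∪ A) * b k) := by
            apply Finset.sum_congr rfl; intros; ring
        _ = ∑ k ∈ B, (f k i - 1) * (μ k B * b k) := hsum
        _ = ∑ k ∈ B, (f k i * (μ k B * b k) - μ k B * b k) := by
            apply Finset.sum_congr rfl; intros; ring
    have hrw1 : ∑ k ∈ B ∪ A, f k i * μ k (B ∪ A) * b k
        = ∑ k ∈ B ∪ A, f k i * (μ k (B ∪ A) * b k) := by
      apply Finset.sum_congr rfl; intros; ring
    have hrw2 : ∑ k ∈ B, f k i * μ k B * b k = ∑ k ∈ B, f k i * (μ k B * b k) := by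
      apply Finset.sum_congr rfl; intros; ring
    rw [hrw1, hrw2]
    linarith [hsum']
  -- W on B ∪ A decomposes additively over A ⊆ D
  have hWBA : ∀ (B : Finset V), Disjoint B D → ∀ A, A ⊆ D →
      W (B ∪ A) = W B + ∑ i ∈ A, (W (B ∪ {i}) - W B) := by
    intro B hBD A
    induction A using Finset.induction_on with
    | empty => intro _; simp
    | @insert i A hiA ih =>
      intro hAD
      have hiD : i ∈ D := hAD (Finset.mem_insert_self i A)
      have hAD' : A ⊆ D := fun x hx => hAD (Finset.mem_insert_of_mem hx)
      have h1 : B ∪ insert i A = insert i (B ∪ A) := by rw [Finset.union_insert]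
      have h2 : B ∪ {i} = insert i B := by
        rw [Finset.union_comm, ← Finset.insert_eq]
      rw [h1, Finset.sum_insert hiA, h2]
      have hΔ := Δ B hBD i hiD A hAD' hiA
      have hih := ih hAD'
      linarith [hΔ, hih]
  -- exponential form
  intro M'
  have hZpos : 0 < Z := by
    rw [hZ]
    exact Finset.sum_pos (fun S _ => exp_pos _) ⟨∅, Finset.mem_univ ∅⟩
  set B := M' \ D with hB
  have hBD : Disjoint B D := Finset.sdiff_disjoint
  have hExp : ∀ A, A ⊆ D →
      exp (W (B ∪ A)) = exp (W B) * ∏ i ∈ A, (exp (W (B ∪ {i})) / exp (W B)) := by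
    intro A hA
    rw [hWBA B hBD A hA, Real.exp_add, Real.exp_sum]
    congr 1
    exact Finset.prod_congr rfl fun i _ => Real.exp_sub _ _
  set C := (∏ i ∈ D ∩ M', p i B) * ∏ i ∈ D \ M', (1 - p i B) with hC
  -- step 1: kernel factor is constant on the support
  have step1 : ∑ M : Finset V, Pi M * K M M'
      = (∑ M : Finset V, if M \ D = B then Pi M else 0) * C := by
    rw [Finset.sum_mul]
    apply Finset.sum_congr rfl
    intro M _
    rw [hK]
    by_cases h : M' \ D = M \ D
    · rw [if_pos h, if_pos h.symm, ← h, ← hB]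
    · rw [if_neg h, if_neg (fun hh => h hh.symm)]
      ring
  -- step 2: reindex the sum by subsets of D
  have step2 : (∑ M : Finset V, if M \ D = B then Pi M else 0)
      = ∑ A ∈ D.powerset, Pi (B ∪ A) := by
    rw [← Finset.sum_filter]
    apply Finset.sum_nbij' (fun M => M ∩ D) (fun A => B ∪ A)
    · intro M _
      exact Finset.mem_powerset.2 Finset.inter_subset_right
    · intro A hA
      have hAD : A ⊆ D := Finset.mem_powerset.1 hA
      simp only [Finset.mem_filter, Finset.mem_univ, true_and]
      rw [Finset.union_sdiff_distrib, Finset.sdiff_eq_self_of_disjoint hBD,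
        Finset.sdiff_eq_empty_iff_subset.2 hAD, Finset.union_empty]
    · intro M hM
      have h : M \ D = B := (Finset.mem_filter.1 hM).2
      rw [← h]
      exact Finset.sdiff_union_inter M D
    · intro A hA
      have hAD : A ⊆ D := Finset.mem_powerset.1 hA
      rw [Finset.union_inter_distrib_right, (Finset.disjoint_iff_inter_eq_empty.1 hBD),
        Finset.inter_eq_left.2 hAD, Finset.empty_union]
    · intro M hM
      have h : M \ D = B := (Finset.mem_filter.1 hM).2
      rw [← h, Finset.sdiff_union_inter M D]
  -- step 3: compute the sum over subsets of D
  have step3 : (∑ A ∈ D.powerset, Pi (B ∪ A))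
      = (exp (W B) / Z) * ∏ i ∈ D, (exp (W (B ∪ {i})) / exp (W B) + 1) := by
    rw [Finset.prod_add]
    rw [Finset.mul_sum, Finset.sum_congr rfl]
    intro A hA
    have hAD : A ⊆ D := Finset.mem_powerset.1 hA
    rw [hPi, hExp A hAD, Finset.prod_const_one, mul_one]
    ring
  rw [step1, step2, step3]
  -- step 4: combine
  have hprodD : C * ∏ i ∈ D, (exp (W (B ∪ {i})) / exp (W B) + 1)
      = ∏ i ∈ D ∩ M', (exp (W (B ∪ {i})) / exp (W B)) := by
    rw [← Finset.prod_inter_mul_prod_diff D M'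
        (fun i => (exp (W (B ∪ {i})) / exp (W B) + 1)), hC]
    rw [show (∏ i ∈ D ∩ M', p i B) * (∏ i ∈ D \ M', (1 - p i B)) *
        ((∏ i ∈ D ∩ M', (exp (W (B ∪ {i})) / exp (W B) + 1)) *
         ∏ i ∈ D \ M', (exp (W (B ∪ {i})) / exp (W B) + 1))
      = ((∏ i ∈ D ∩ M', p i B) * ∏ i ∈ D ∩ M', (exp (W (B ∪ {i})) / exp (W B) + 1)) *
        ((∏ i ∈ D \ M', (1 - p i B)) * ∏ i ∈ D \ M', (exp (W (B ∪ {i})) / exp (W B) + 1))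
      from by ring]
    rw [← Finset.prod_mul_distrib, ← Finset.prod_mul_distrib]
    have h1 : ∀ i, p i B * (exp (W (B ∪ {i})) / exp (W B) + 1)
        = exp (W (B ∪ {i})) / exp (W B) := by
      intro i
      rw [hp]
      have hs : exp (W (B ∪ {i})) + exp (W B) ≠ 0 := by positivity
      field_simp
    have h2 : ∀ i, (1 - p i B) * (exp (W (B ∪ {i})) / exp (W B) + 1) = 1 := by
      intro i
      rw [hp]
      have hs : exp (W (B ∪ {i})) + exp (W B) ≠ 0 := by positivity
      field_simp
      ring
    rw [Finset.prod_congr rfl fun i _ => h1 i, Finset.prod_congr rfl fun i _ => h2 i,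
      Finset.prod_const_one, mul_one]
  calc exp (W B) / Z * (∏ i ∈ D, (exp (W (B ∪ {i})) / exp (W B) + 1)) * C
      = (exp (W B) / Z) * (C * ∏ i ∈ D, (exp (W (B ∪ {i})) / exp (W B) + 1)) := by ring
    _ = (exp (W B) / Z) * ∏ i ∈ D ∩ M', (exp (W (B ∪ {i})) / exp (W B)) := by rw [hprodD]
    _ = exp (W (B ∪ (D ∩ M'))) / Z := by
        rw [hExp (D ∩ M') Finset.inter_subset_left]; ring
    _ = Pi M' := by
        rw [hPi]
        congr 2
        rw [hB, Finset.inter_comm, Finset.sdiff_union_inter]
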